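/- arXiv:2202.11502 — 2 statements merged into one kernel-verified Lean document; each statement's English description precedes it below -/
import Mathlib

section
/- Let f, g : [0,1] → ℝ be continuous functions. Then for every polynomial expression P(f,g) in f and g with real coefficients (i.e., every element of the ℝ-subalgebra of C[0,1] generated by f and g), the upper box dimension of the graph of P(f,g) satisfies dim_B̄ G(P(f,g)) ≤ max{dim_B̄ G(f), dim_B̄ G(g)}. -/
set_option linter.unusedSectionVars false


open Set Filter Metric

noncomputable def coverNum {α : Type*} [PseudoMetricSpace α] (F : Set α) (δ : ℝ) : ℕ :=
  sInf {n : ℕ | ∃ t : Finset α, t.card = n ∧ F ⊆ ⋃ p ∈ t, Metric.closedBall p δ}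

noncomputable def upperBoxDim {α : Type*} [PseudoMetricSpace α] (F : Set α) : ℝ :=
  Filter.limsup (fun δ : ℝ => Real.log (coverNum F δ) / -Real.log δ)
    (nhdsWithin (0 : ℝ) (Set.Ioi 0))

noncomputable def lowerBoxDim {α : Type*} [PseudoMetricSpace α] (F : Set α) : ℝ :=
  Filter.liminf (fun δ : ℝ => Real.log (coverNum F δ) / -Real.log δ)
    (nhdsWithin (0 : ℝ) (Set.Ioi 0))

/-- Graph of `f` over the set `X`. -/
def fnGraphOn (f : ℝ → ℝ) (X : Set ℝ) : Set (ℝ × ℝ) := (fun x => (x, f x)) '' X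

/-- Graph of `f` over `[0,1]`. -/
def G (f : ℝ → ℝ) : Set (ℝ × ℝ) := fnGraphOn f (Set.Icc 0 1)

/-- Graph of a continuous map on `[0,1]`. -/
def graphC (f : C(↥(Set.Icc (0:ℝ) 1), ℝ)) : Set (ℝ × ℝ) :=
  Set.range fun x : ↥(Set.Icc (0:ℝ) 1) => ((x : ℝ), f x)

lemma coverSet_nonempty {F : Set (ℝ×ℝ)} (hF : IsCompact F) {δ : ℝ} (hδ : 0 < δ) :
    {n : ℕ | ∃ t : Finset (ℝ×ℝ), t.card = n ∧ F ⊆ ⋃ p ∈ t, closedBall p δ}.Nonempty := by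
  obtain ⟨t, ht⟩ := hF.elim_finite_subcover (fun p : ℝ×ℝ => ball p δ)
    (fun p => isOpen_ball) (fun x hx => mem_iUnion.2 ⟨x, mem_ball_self hδ⟩)
  exact ⟨t.card, t, rfl, ht.trans (iUnion₂_mono fun p _ => ball_subset_closedBall)⟩

lemma coverNum_le_card {α : Type*} [PseudoMetricSpace α] {F : Set α} {δ : ℝ}
    (t : Finset α) (ht : F ⊆ ⋃ p ∈ t, closedBall p δ) : coverNum F δ ≤ t.card :=
  Nat.sInf_le ⟨t, rfl, ht⟩

lemma card_le_coverNum {F : Set (ℝ×ℝ)} (hF : IsCompact F) {δ : ℝ} (hδ : 0 < δ)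
    (s : Finset (ℝ×ℝ)) (hs : ↑s ⊆ F)
    (hsep : ∀ p ∈ s, ∀ q ∈ s, p ≠ q → 2*δ < dist p q) :
    s.card ≤ coverNum F δ := by
  obtain ⟨t, htc, htcov⟩ := Nat.sInf_mem (coverSet_nonempty hF hδ)
  rw [coverNum, ← htc]
  classical
  have hex : ∀ p ∈ s, ∃ c ∈ t, p ∈ closedBall c δ := by
    intro p hp
    have := htcov (hs hp)
    simpa using this
  choose φ hφt hφb using hex
  exact Finset.card_le_card_of_injOn (fun p => if h : p ∈ s then φ p h else p)
    (fun p hp => by simp only [Finset.mem_coe, dif_pos (Finset.mem_coe.1 hp)]; exact hφt p hp)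
    (by
      intro p hp q hq hpq
      simp only [Finset.mem_coe] at hp hq
      simp only [dif_pos hp, dif_pos hq] at hpq
      by_contra hne
      have h1 := hφb p hp
      have h2 := hφb q hq
      rw [hpq] at h1
      have : dist p q ≤ 2*δ := by
        calc dist p q ≤ dist p (φ q hq) + dist (φ q hq) q := dist_triangle _ _ _
        _ ≤ δ + δ := add_le_add (mem_closedBall.1 h1) (by
            rw [dist_comm]; exact mem_closedBall.1 h2)
        _ = 2*δ := by ring
      exact absurd this (not_le.2 (hsep p hp q hq hne)))

/-- The `i`-th column interval of width `δ`. -/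
def Jcol (δ : ℝ) (i : ℕ) : Set ℝ := Icc (i*δ) (min ((i+1)*δ) 1)

noncomputable def oscm (h : ℝ → ℝ) (δ : ℝ) (i : ℕ) : ℝ := sInf (h '' Jcol δ i)
noncomputable def oscM (h : ℝ → ℝ) (δ : ℝ) (i : ℕ) : ℝ := sSup (h '' Jcol δ i)
noncomputable def osc (h : ℝ → ℝ) (δ : ℝ) (i : ℕ) : ℝ := oscM h δ i - oscm h δ i

section Cols
variable {δ : ℝ} (hδ : 0 < δ) {i : ℕ}

include hδ

lemma Jcol_subset : Jcol δ i ⊆ Icc (0:ℝ) 1 := by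
  intro x hx
  obtain ⟨h1, h2⟩ := hx
  have : (0:ℝ) ≤ (i:ℝ)*δ := by positivity
  exact ⟨le_trans this h1, h2.trans (min_le_right _ _)⟩

lemma Jcol_nonempty (hi : i < ⌈1/δ⌉₊) : ((i:ℝ)*δ) ∈ Jcol δ i := by
  have h1 : (i:ℝ) < 1/δ := Nat.lt_ceil.1 hi
  have h2 : (i:ℝ)*δ < 1 := by
    have := mul_lt_mul_of_pos_right h1 hδ
    rwa [one_div, inv_mul_cancel₀ (ne_of_gt hδ)] at this
  refine ⟨le_refl _, le_min (by nlinarith [Nat.cast_nonneg (α := ℝ) i]) h2.le⟩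

omit hδ in
lemma isCompact_Jcol : IsCompact (Jcol δ i) := isCompact_Icc

lemma cover_Icc (x : ℝ) (hx : x ∈ Icc (0:ℝ) 1) :
    ∃ i < ⌈1/δ⌉₊, x ∈ Jcol δ i := by
  set n := ⌈1/δ⌉₊ with hn
  have hn1 : 1 ≤ n := Nat.one_le_iff_ne_zero.2 (by
    simp only [hn, ne_eq, Nat.ceil_eq_zero, not_le]
    positivity)
  obtain ⟨hx0, hx1⟩ := hx
  have hxd : (0:ℝ) ≤ x/δ := by positivity
  have hkey : ((⌊x/δ⌋₊:ℝ)) * δ ≤ x := by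
    calc ((⌊x/δ⌋₊ : ℝ)) * δ ≤ (x/δ) * δ :=
        mul_le_mul_of_nonneg_right (Nat.floor_le hxd) hδ.le
      _ = x := div_mul_cancel₀ x (ne_of_gt hδ)
  by_cases hc : ⌊x/δ⌋₊ ≤ n - 1
  · refine ⟨⌊x/δ⌋₊, by omega, hkey, ?_⟩
    refine le_min ?_ hx1
    have h2 := Nat.lt_floor_add_one (x/δ)
    calc x = (x/δ)*δ := (div_mul_cancel₀ x (ne_of_gt hδ)).symm
      _ ≤ ((⌊x/δ⌋₊:ℝ)+1)*δ := mul_le_mul_of_nonneg_right h2.le hδ.le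
  · have hcast : ((n-1:ℕ):ℝ) = (n:ℝ) - 1 := by
      push_cast [Nat.cast_sub hn1]; ring
    refine ⟨n-1, by omega, ?_, ?_⟩
    · have h1 : ((n-1:ℕ):ℝ) ≤ (⌊x/δ⌋₊:ℝ) := Nat.cast_le.2 (by omega)
      calc ((n-1:ℕ):ℝ)*δ ≤ (⌊x/δ⌋₊:ℝ)*δ := mul_le_mul_of_nonneg_right h1 hδ.le
        _ ≤ x := hkey
    · refine le_min ?_ hx1
      have h2 : (1:ℝ) ≤ (n:ℝ)*δ := by
        have h3 := Nat.le_ceil (1/δ)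
        calc (1:ℝ) = (1/δ)*δ := (div_mul_cancel₀ 1 (ne_of_gt hδ)).symm
          _ ≤ (n:ℝ)*δ := mul_le_mul_of_nonneg_right h3 hδ.le
      rw [hcast]
      linarith

variable {h : ℝ → ℝ}

omit hδ in
lemma img_compact (hc : Continuous h) : IsCompact (h '' Jcol δ i) :=
  isCompact_Jcol.image hc

lemma oscm_le (hc : Continuous h) {x : ℝ} (hx : x ∈ Jcol δ i) : oscm h δ i ≤ h x :=
  csInf_le (img_compact hc).bddBelow ⟨x, hx, rfl⟩

lemma le_oscM (hc : Continuous h) {x : ℝ} (hx : x ∈ Jcol δ i) : h x ≤ oscM h δ i :=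
  le_csSup (img_compact hc).bddAbove ⟨x, hx, rfl⟩

lemma osc_nonneg (hc : Continuous h) (hi : i < ⌈1/δ⌉₊) : 0 ≤ osc h δ i :=
  sub_nonneg.2 (le_trans (oscm_le hδ hc (Jcol_nonempty hδ hi))
    (le_oscM hδ hc (Jcol_nonempty hδ hi)))

lemma oscM_mem (hc : Continuous h) (hi : i < ⌈1/δ⌉₊) : ∃ b ∈ Jcol δ i, h b = oscM h δ i := by
  obtain ⟨b, hb, hbe⟩ := (img_compact hc (δ := δ) (i := i)).sSup_mem
    ⟨_, ⟨_, Jcol_nonempty hδ hi, rfl⟩⟩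
  exact ⟨b, hb, hbe⟩

lemma oscm_mem (hc : Continuous h) (hi : i < ⌈1/δ⌉₊) : ∃ a ∈ Jcol δ i, h a = oscm h δ i := by
  obtain ⟨a, ha, hae⟩ := (img_compact hc (δ := δ) (i := i)).sInf_mem
    ⟨_, ⟨_, Jcol_nonempty hδ hi, rfl⟩⟩
  exact ⟨a, ha, hae⟩

/-- Intermediate value: every value in `[m_i, M_i]` is attained on the column. -/
lemma exists_pt_eq (hc : Continuous h) (hi : i < ⌈1/δ⌉₊) {v : ℝ} (hv : v ∈ Icc (oscm h δ i) (oscM h δ i)) :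
    ∃ x ∈ Jcol δ i, h x = v := by
  obtain ⟨a, ha, hae⟩ := oscm_mem hδ hc hi
  obtain ⟨b, hb, hbe⟩ := oscM_mem hδ hc hi
  have hsub : uIcc a b ⊆ Jcol δ i := uIcc_subset_Icc ha hb
  have := intermediate_value_uIcc (hc.continuousOn (s := uIcc a b))
  have hv' : v ∈ uIcc (h a) (h b) := by
    rw [hae, hbe, uIcc_of_le (hv.1.trans hv.2)]
    exact hv
  obtain ⟨x, hx, hxe⟩ := this hv'
  exact ⟨x, hsub hx, hxe⟩

end Cols
section Upper
variable {δ : ℝ} (hδ : 0 < δ) {h : ℝ → ℝ}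

include hδ

lemma coverNum_G_le (hc : Continuous h) :
    (coverNum (G h) δ : ℝ) ≤ (∑ i ∈ Finset.range ⌈1/δ⌉₊, osc h δ i)/(2*δ) + ⌈1/δ⌉₊ := by
  classical
  set n := ⌈1/δ⌉₊ with hn
  set k : ℕ → ℕ := fun i => ⌊osc h δ i/(2*δ)⌋₊ + 1 with hk
  set t : Finset (ℝ × ℝ) := (Finset.range n).biUnion
    (fun i => (Finset.range (k i)).image
      (fun j : ℕ => ((i:ℝ)*δ, oscm h δ i + δ*(2*(j:ℝ)+1)))) with ht
  have hcov : G h ⊆ ⋃ p ∈ t, closedBall p δ := by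
    rintro p ⟨x, hx, rfl⟩
    obtain ⟨i, hi, hxJ⟩ := cover_Icc hδ x hx
    have hm := oscm_le hδ hc hxJ
    have hM := le_oscM hδ hc hxJ
    set y := h x - oscm h δ i with hy
    have hy0 : 0 ≤ y := by linarith
    set j := ⌊y/(2*δ)⌋₊ with hj
    have h2δ : (0:ℝ) < 2*δ := by linarith
    have hjk : j < k i := by
      have hyosc : y ≤ osc h δ i := by simp only [hy, osc]; linarith
      have hdd : y/(2*δ) ≤ osc h δ i/(2*δ) := by gcongr
      have := Nat.floor_le_floor hdd
      simp only [hk]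
      omega
    refine mem_iUnion₂.2 ⟨((i:ℝ)*δ, oscm h δ i + δ*(2*(j:ℝ)+1)), ?_, ?_⟩
    · simp only [ht, Finset.mem_biUnion, Finset.mem_image, Finset.mem_range]
      exact ⟨i, hi, j, hjk, rfl⟩
    · rw [mem_closedBall, Prod.dist_eq, max_le_iff]
      dsimp only
      constructor
      · rw [Real.dist_eq, abs_le]
        have h1 : (i:ℝ)*δ ≤ x := hxJ.1
        have h2 : x ≤ ((i:ℝ)+1)*δ := hxJ.2.trans (min_le_left _ _)
        constructor <;> nlinarith
      · rw [Real.dist_eq, abs_le]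
        have h1 : (j:ℝ)*(2*δ) ≤ y := by
          have := Nat.floor_le (by positivity : (0:ℝ) ≤ y/(2*δ))
          calc (j:ℝ)*(2*δ) ≤ (y/(2*δ))*(2*δ) := mul_le_mul_of_nonneg_right this h2δ.le
            _ = y := div_mul_cancel₀ y (ne_of_gt h2δ)
        have h2 : y < ((j:ℝ)+1)*(2*δ) := by
          have := Nat.lt_floor_add_one (y/(2*δ))
          calc y = (y/(2*δ))*(2*δ) := (div_mul_cancel₀ y (ne_of_gt h2δ)).symm
            _ < ((j:ℝ)+1)*(2*δ) := mul_lt_mul_of_pos_right this h2δ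
        constructor <;> nlinarith
  have hcard : coverNum (G h) δ ≤ ∑ i ∈ Finset.range n, k i := by
    refine (coverNum_le_card t hcov).trans ?_
    refine (Finset.card_biUnion_le).trans ?_
    exact Finset.sum_le_sum fun i _ => (Finset.card_image_le).trans (by simp)
  calc (coverNum (G h) δ : ℝ) ≤ ∑ i ∈ Finset.range n, (k i : ℝ) := by
        exact_mod_cast Nat.cast_le.2 hcard |>.trans_eq (by push_cast; ring)
    _ ≤ ∑ i ∈ Finset.range n, (osc h δ i/(2*δ) + 1) := by
        refine Finset.sum_le_sum fun i hi => ?_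
        have := Nat.floor_le (by
          have := osc_nonneg hδ hc (Finset.mem_range.1 hi)
          positivity : (0:ℝ) ≤ osc h δ i/(2*δ))
        simp only [hk]
        push_cast
        linarith
    _ = (∑ i ∈ Finset.range n, osc h δ i)/(2*δ) + n := by
        rw [Finset.sum_add_distrib, Finset.sum_div]
        simp [Finset.sum_div]
end Upper

lemma nat_sep {a b : ℕ} (hab : a ≠ b) : (1:ℝ) ≤ |(a:ℝ) - (b:ℝ)| := by
  rcases Nat.lt_or_ge a b with hl | hl
  · have hb : (a:ℝ) + 1 ≤ b := by exact_mod_cast hl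
    rw [abs_sub_comm, abs_of_nonneg (by linarith)]
    linarith
  · have hl' : b < a := lt_of_le_of_ne hl (Ne.symm hab)
    have hb : (b:ℝ) + 1 ≤ a := by exact_mod_cast hl'
    rw [abs_of_nonneg (by linarith)]
    linarith

section Lower
variable {δ : ℝ} (hδ : 0 < δ) {h : ℝ → ℝ}

lemma isCompact_G (hc : Continuous h) : IsCompact (G h) :=
  isCompact_Icc.image (continuous_id.prodMk hc)

include hδ

lemma sum_c_le_coverNum (hc : Continuous h) :
    ∑ i ∈ Finset.range ⌈1/δ⌉₊, (⌊osc h δ i/(3*δ)⌋₊ + 1) ≤ 4 * coverNum (G h) δ := by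
  classical
  set n := ⌈1/δ⌉₊ with hn
  set c : ℕ → ℕ := fun i => ⌊osc h δ i/(3*δ)⌋₊ + 1 with hcdef
  have h3δ : (0:ℝ) < 3*δ := by linarith
  have hpt : ∀ i j : ℕ, ∃ x, i < n → j < c i →
      x ∈ Jcol δ i ∧ h x = oscm h δ i + 3*δ*(j:ℝ) := by
    intro i j
    by_cases hij : i < n ∧ j < c i
    · obtain ⟨hi, hj⟩ := hij
      have hosc := osc_nonneg hδ hc hi
      have hjle : (j:ℝ) ≤ (⌊osc h δ i/(3*δ)⌋₊ : ℝ) := Nat.cast_le.2 (by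
        simp only [hcdef] at hj; omega)
      have hfl : (⌊osc h δ i/(3*δ)⌋₊ : ℝ) ≤ osc h δ i/(3*δ) :=
        Nat.floor_le (by positivity)
      have hval : oscm h δ i + 3*δ*(j:ℝ) ∈ Icc (oscm h δ i) (oscM h δ i) := by
        constructor
        · nlinarith [Nat.cast_nonneg (α := ℝ) j]
        · have h1 : 3*δ*(j:ℝ) ≤ osc h δ i := by
            calc 3*δ*(j:ℝ) ≤ 3*δ*(osc h δ i/(3*δ)) := by nlinarith
              _ = osc h δ i := by field_simp
          simp only [osc] at h1
          linarith
      obtain ⟨x, hx, he⟩ := exists_pt_eq hδ hc hi hval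
      exact ⟨x, fun _ _ => ⟨hx, he⟩⟩
    · exact ⟨0, fun hi hj => absurd ⟨hi, hj⟩ hij⟩
  choose pt hpt using hpt
  have key : ∀ r : ℕ, ∑ i ∈ (Finset.range n).filter (fun i => i % 4 = r), c i
      ≤ coverNum (G h) δ := by
    intro r
    set s0 : Finset (Σ _ : ℕ, ℕ) :=
      ((Finset.range n).filter (fun i => i % 4 = r)).sigma (fun i => Finset.range (c i))
      with hs0
    set Pf : (Σ _ : ℕ, ℕ) → ℝ × ℝ := fun ij => (pt ij.1 ij.2, h (pt ij.1 ij.2)) with hPf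
    have hmem0 : ∀ ij ∈ s0, ij.1 < n ∧ ij.1 % 4 = r ∧ ij.2 < c ij.1 := by
      intro ij hij
      simp only [hs0, Finset.mem_sigma, Finset.mem_filter, Finset.mem_range] at hij
      exact ⟨hij.1.1, hij.1.2, hij.2⟩
    have hspec : ∀ ij ∈ s0, pt ij.1 ij.2 ∈ Jcol δ ij.1 ∧
        h (pt ij.1 ij.2) = oscm h δ ij.1 + 3*δ*(ij.2:ℝ) := by
      intro ij hij
      obtain ⟨h1, _, h3⟩ := hmem0 ij hij
      exact hpt ij.1 ij.2 h1 h3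
    have hsep : ∀ a ∈ s0, ∀ b ∈ s0, a ≠ b → 2*δ < dist (Pf a) (Pf b) := by
      intro a ha b hb hab
      obtain ⟨ha1, ha2, ha3⟩ := hmem0 a ha
      obtain ⟨hb1, hb2, hb3⟩ := hmem0 b hb
      obtain ⟨haJ, haV⟩ := hspec a ha
      obtain ⟨hbJ, hbV⟩ := hspec b hb
      by_cases hii : a.1 = b.1
      · have hjj : a.2 ≠ b.2 := by
          intro hc'; apply hab; cases a; cases b; simp_all
        have hd2 : 3*δ ≤ dist (Pf a).2 (Pf b).2 := by
          simp only [hPf, Real.dist_eq]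
          rw [haV, hbV, hii]
          have h1 := nat_sep hjj
          calc 3*δ = 3*δ*1 := by ring
            _ ≤ 3*δ*|(a.2:ℝ) - (b.2:ℝ)| := by nlinarith
            _ = |oscm h δ b.1 + 3*δ*(a.2:ℝ) - (oscm h δ b.1 + 3*δ*(b.2:ℝ))| := by
                rw [show oscm h δ b.1 + 3*δ*(a.2:ℝ) - (oscm h δ b.1 + 3*δ*(b.2:ℝ))
                  = 3*δ*((a.2:ℝ) - (b.2:ℝ)) by ring, abs_mul, abs_of_pos h3δ]

        calc 2*δ < 3*δ := by linarith
          _ ≤ dist (Pf a).2 (Pf b).2 := hd2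
          _ ≤ dist (Pf a) (Pf b) := by rw [Prod.dist_eq]; exact le_max_right _ _
      · have h4 : a.1 + 4 ≤ b.1 ∨ b.1 + 4 ≤ a.1 := by omega
        have hxa1 : (a.1:ℝ)*δ ≤ pt a.1 a.2 := haJ.1
        have hxa2 : pt a.1 a.2 ≤ ((a.1:ℝ)+1)*δ := haJ.2.trans (min_le_left _ _)
        have hxb1 : (b.1:ℝ)*δ ≤ pt b.1 b.2 := hbJ.1
        have hxb2 : pt b.1 b.2 ≤ ((b.1:ℝ)+1)*δ := hbJ.2.trans (min_le_left _ _)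
        have hd1 : 3*δ ≤ dist (Pf a).1 (Pf b).1 := by
          simp only [hPf, Real.dist_eq]
          rcases h4 with h4 | h4
          · have hcast : (a.1:ℝ) + 4 ≤ b.1 := by exact_mod_cast h4
            have hge : 3*δ ≤ pt b.1 b.2 - pt a.1 a.2 := by nlinarith
            rw [abs_sub_comm, abs_of_nonneg (by linarith)]
            linarith
          · have hcast : (b.1:ℝ) + 4 ≤ a.1 := by exact_mod_cast h4
            have hge : 3*δ ≤ pt a.1 a.2 - pt b.1 b.2 := by nlinarith
            rw [abs_of_nonneg (by linarith)]
            linarith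
        calc 2*δ < 3*δ := by linarith
          _ ≤ dist (Pf a).1 (Pf b).1 := hd1
          _ ≤ dist (Pf a) (Pf b) := by rw [Prod.dist_eq]; exact le_max_left _ _
    set s : Finset (ℝ × ℝ) := s0.image Pf with hs
    have hinj : Set.InjOn Pf ↑s0 := by
      intro a ha b hb hab
      by_contra hne
      have := hsep a ha b hb hne
      rw [hab] at this
      simp only [dist_self] at this
      linarith
    have hcard : s.card = s0.card := Finset.card_image_of_injOn hinj
    have hsub : ↑s ⊆ G h := by
      intro p hp
      simp only [hs, Finset.coe_image, Set.mem_image, Finset.mem_coe] at hp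
      obtain ⟨ij, hij, rfl⟩ := hp
      obtain ⟨hJ, _⟩ := hspec ij hij
      exact ⟨pt ij.1 ij.2, Jcol_subset hδ hJ, rfl⟩
    have hsep' : ∀ p ∈ s, ∀ q ∈ s, p ≠ q → 2*δ < dist p q := by
      intro p hp q hq hpq
      simp only [hs, Finset.mem_image] at hp hq
      obtain ⟨a, ha, rfl⟩ := hp
      obtain ⟨b, hb, rfl⟩ := hq
      exact hsep a ha b hb (fun hab => hpq (by rw [hab]))
    have hle := card_le_coverNum (isCompact_G hc) hδ s hsub hsep'
    rw [hcard, Finset.card_sigma] at hle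
    simpa using hle
  have hfib := Finset.sum_fiberwise_of_maps_to (g := fun i => i % 4)
    (t := Finset.range 4) (s := Finset.range n)
    (fun i _ => Finset.mem_range.2 (Nat.mod_lt _ (by norm_num))) c
  calc ∑ i ∈ Finset.range n, c i
      = ∑ r ∈ Finset.range 4, ∑ i ∈ (Finset.range n).filter (fun i => i % 4 = r), c i :=
        hfib.symm
    _ ≤ ∑ _r ∈ Finset.range 4, coverNum (G h) δ :=
        Finset.sum_le_sum fun r _ => key r
    _ = 4 * coverNum (G h) δ := by simp [Finset.sum_const, mul_comm]
end Lower

section Compare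
variable {δ : ℝ} (hδ : 0 < δ)

include hδ

lemma sum_osc_le (h : ℝ → ℝ) (hc : Continuous h) :
    (∑ i ∈ Finset.range ⌈1/δ⌉₊, osc h δ i) ≤ 12*δ*(coverNum (G h) δ : ℝ) ∧
    ((⌈1/δ⌉₊ : ℝ)) ≤ 4*(coverNum (G h) δ : ℝ) := by
  have h3δ : (0:ℝ) < 3*δ := by linarith
  have hkey := sum_c_le_coverNum hδ hc
  have hcast : (∑ i ∈ Finset.range ⌈1/δ⌉₊, ((⌊osc h δ i/(3*δ)⌋₊ : ℝ) + 1))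
      ≤ 4*(coverNum (G h) δ : ℝ) := by
    have := Nat.cast_le (α := ℝ) |>.2 hkey
    push_cast at this
    convert this using 2
  constructor
  · have h1 : ∀ i ∈ Finset.range ⌈1/δ⌉₊, osc h δ i/(3*δ) ≤ (⌊osc h δ i/(3*δ)⌋₊ : ℝ) + 1 :=
      fun i _ => (Nat.lt_floor_add_one _).le
    have h2 : (∑ i ∈ Finset.range ⌈1/δ⌉₊, osc h δ i/(3*δ)) ≤ 4*(coverNum (G h) δ : ℝ) :=
      (Finset.sum_le_sum h1).trans hcast
    rw [← Finset.sum_div] at h2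
    calc (∑ i ∈ Finset.range ⌈1/δ⌉₊, osc h δ i)
        = ((∑ i ∈ Finset.range ⌈1/δ⌉₊, osc h δ i)/(3*δ))*(3*δ) :=
          (div_mul_cancel₀ _ (ne_of_gt h3δ)).symm
      _ ≤ (4*(coverNum (G h) δ : ℝ))*(3*δ) := mul_le_mul_of_nonneg_right h2 h3δ.le
      _ = 12*δ*(coverNum (G h) δ : ℝ) := by ring
  · have h1 : ∀ i ∈ Finset.range ⌈1/δ⌉₊, (1:ℝ) ≤ (⌊osc h δ i/(3*δ)⌋₊ : ℝ) + 1 :=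
      fun i _ => by simp [Nat.cast_nonneg]
    calc ((⌈1/δ⌉₊ : ℝ)) = ∑ i ∈ Finset.range ⌈1/δ⌉₊, (1:ℝ) := by simp
      _ ≤ _ := (Finset.sum_le_sum h1).trans hcast

lemma coverNum_compare {f g h : ℝ → ℝ} (hcf : Continuous f) (hcg : Continuous g)
    (hch : Continuous h) {L : ℝ} (hL : 1 ≤ L)
    (hlip : ∀ x ∈ Icc (0:ℝ) 1, ∀ y ∈ Icc (0:ℝ) 1,
      |h x - h y| ≤ L*(|f x - f y| + |g x - g y|)) :
    (coverNum (G h) δ : ℝ) ≤ 10*L*((coverNum (G f) δ : ℝ) + (coverNum (G g) δ : ℝ)) := by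
  set n := ⌈1/δ⌉₊ with hn
  have hoscosc : ∀ i ∈ Finset.range n, osc h δ i ≤ L*(osc f δ i + osc g δ i) := by
    intro i hi
    have hi' := Finset.mem_range.1 hi
    obtain ⟨a, haJ, hae⟩ := oscm_mem hδ hch hi'
    obtain ⟨b, hbJ, hbe⟩ := oscM_mem hδ hch hi'
    have ha1 := Jcol_subset hδ haJ
    have hb1 := Jcol_subset hδ hbJ
    have hfb := le_oscM hδ hcf hbJ
    have hfa := oscm_le hδ hcf haJ
    have hfb' := oscm_le hδ hcf hbJ
    have hfa' := le_oscM hδ hcf haJ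
    have hgb := le_oscM hδ hcg hbJ
    have hga := oscm_le hδ hcg haJ
    have hgb' := oscm_le hδ hcg hbJ
    have hga' := le_oscM hδ hcg haJ
    have hf : |f b - f a| ≤ osc f δ i := by
      rw [osc, abs_le]; constructor <;> linarith
    have hg : |g b - g a| ≤ osc g δ i := by
      rw [osc, abs_le]; constructor <;> linarith
    have := hlip b hb1 a ha1
    calc osc h δ i = h b - h a := by rw [osc, hae, hbe]
      _ ≤ |h b - h a| := le_abs_self _
      _ ≤ L*(|f b - f a| + |g b - g a|) := this
      _ ≤ L*(osc f δ i + osc g δ i) := by nlinarith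
  have hup := coverNum_G_le hδ hch
  have hlf := sum_osc_le hδ f hcf
  have hlg := sum_osc_le hδ g hcg
  set Nf := (coverNum (G f) δ : ℝ)
  set Ng := (coverNum (G g) δ : ℝ)
  have hNf0 : 0 ≤ Nf := Nat.cast_nonneg _
  have hNg0 : 0 ≤ Ng := Nat.cast_nonneg _
  have hsum : (∑ i ∈ Finset.range n, osc h δ i) ≤ L*(12*δ*Nf + 12*δ*Ng) := by
    calc (∑ i ∈ Finset.range n, osc h δ i)
        ≤ ∑ i ∈ Finset.range n, L*(osc f δ i + osc g δ i) := Finset.sum_le_sum hoscosc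
      _ = L*((∑ i ∈ Finset.range n, osc f δ i) + (∑ i ∈ Finset.range n, osc g δ i)) := by
          rw [← Finset.mul_sum, Finset.sum_add_distrib]
      _ ≤ L*(12*δ*Nf + 12*δ*Ng) := by nlinarith [hlf.1, hlg.1]
  have h2δ : (0:ℝ) < 2*δ := by linarith
  calc (coverNum (G h) δ : ℝ)
      ≤ (∑ i ∈ Finset.range n, osc h δ i)/(2*δ) + n := hup
    _ ≤ (L*(12*δ*Nf + 12*δ*Ng))/(2*δ) + 4*Nf := by
        have := hlf.2
        gcongr
    _ = 6*L*(Nf + Ng) + 4*Nf := by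
        field_simp
        ring
    _ ≤ 10*L*(Nf + Ng) := by nlinarith
end Compare

section Dim

lemma one_le_coverNum {δ : ℝ} (hδ : 0 < δ) {f : ℝ → ℝ} (hcf : Continuous f) :
    1 ≤ coverNum (G f) δ := by
  by_contra hN
  have h0 : coverNum (G f) δ = 0 := by omega
  have h1 := (sum_osc_le hδ f hcf).2
  rw [h0] at h1
  have hn : 1 ≤ ⌈1/δ⌉₊ := Nat.ceil_pos.2 (by positivity)
  have h2 : (1:ℝ) ≤ (⌈1/δ⌉₊:ℝ) := by exact_mod_cast hn
  push_cast at h1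
  linarith

lemma osc_le_total {δ : ℝ} (hδ : 0 < δ) {f : ℝ → ℝ} (hcf : Continuous f) {i : ℕ}
    (hi : i < ⌈1/δ⌉₊) : osc f δ i ≤ osc f 1 0 := by
  have hJ1 : Jcol 1 0 = Icc (0:ℝ) 1 := by
    simp [Jcol]
  have hsub : Jcol δ i ⊆ Jcol 1 0 := by rw [hJ1]; exact Jcol_subset hδ
  have hne : (f '' Jcol δ i).Nonempty := ⟨_, _, Jcol_nonempty hδ hi, rfl⟩
  have h1 : oscM f δ i ≤ oscM f 1 0 :=
    csSup_le_csSup (img_compact hcf).bddAbove hne (Set.image_mono hsub)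
  have h2 : oscm f 1 0 ≤ oscm f δ i :=
    csInf_le_csInf (img_compact hcf).bddBelow hne (Set.image_mono hsub)
  simp only [osc]
  linarith

lemma coverNum_le_poly {δ : ℝ} (hδ0 : 0 < δ) (hδ1 : δ ≤ 1) {f : ℝ → ℝ}
    (hcf : Continuous f) :
    (coverNum (G f) δ : ℝ) ≤ (osc f 1 0 + 2)/δ^2 := by
  set n := ⌈1/δ⌉₊ with hn
  set B := osc f 1 0 with hB
  have hB0 : 0 ≤ B := osc_nonneg one_pos hcf (by rw [Nat.ceil_pos]; norm_num)
  have hup := coverNum_G_le hδ0 hcf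
  have hsum : (∑ i ∈ Finset.range n, osc f δ i) ≤ n*B :=
    (Finset.sum_le_sum fun i hi => osc_le_total hδ0 hcf (Finset.mem_range.1 hi)).trans
      (by rw [Finset.sum_const, Finset.card_range, nsmul_eq_mul])
  have hncast : (n:ℝ) ≤ 2/δ := by
    have h1 : (n:ℝ) < 1/δ + 1 := Nat.ceil_lt_add_one (by positivity)
    have h2 : (1:ℝ) ≤ 1/δ := by
      rw [le_div_iff₀ hδ0]; linarith
    have h3 : (2:ℝ)/δ = 1/δ + 1/δ := by ring
    linarith
  have h2δ : (0:ℝ) < 2*δ := by linarith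
  calc (coverNum (G f) δ : ℝ) ≤ (∑ i ∈ Finset.range n, osc f δ i)/(2*δ) + n := hup
    _ ≤ (n*B)/(2*δ) + n := by gcongr
    _ ≤ ((2/δ)*B)/(2*δ) + 2/δ := by gcongr
    _ = B/δ^2 + 2/δ := by field_simp
    _ ≤ B/δ^2 + 2/δ^2 := by
        have h24 : (2:ℝ)/δ ≤ 2/δ^2 := by
          rw [div_le_div_iff₀ hδ0 (by positivity)]
          nlinarith
        linarith
    _ = (B + 2)/δ^2 := by ring

lemma tendsto_div_neg_log (K : ℝ) :
    Filter.Tendsto (fun δ : ℝ => K/(-Real.log δ)) (nhdsWithin (0:ℝ) (Set.Ioi 0))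
      (nhds 0) := by
  have h1 : Filter.Tendsto (fun δ : ℝ => -Real.log δ) (nhdsWithin (0:ℝ) (Set.Ioi 0))
      Filter.atTop := tendsto_neg_atTop_iff.2 Real.tendsto_log_nhdsGT_zero
  have h2 := h1.inv_tendsto_atTop
  have h3 := h2.const_mul K
  rw [mul_zero] at h3
  simpa [div_eq_mul_inv] using h3

lemma ev_Ioo : ∀ᶠ δ in nhdsWithin (0:ℝ) (Set.Ioi 0), δ ∈ Ioo (0:ℝ) 1 :=
  Filter.eventually_of_mem (Ioo_mem_nhdsGT_of_mem ⟨le_refl 0, one_pos⟩) (fun _ hx => hx)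

lemma ev_nonneg {f : ℝ → ℝ} (hcf : Continuous f) :
    ∀ᶠ δ in nhdsWithin (0:ℝ) (Set.Ioi 0),
      0 ≤ Real.log (coverNum (G f) δ) / -Real.log δ := by
  filter_upwards [ev_Ioo] with δ hδ
  have h1 : (1:ℝ) ≤ (coverNum (G f) δ : ℝ) := by
    exact_mod_cast one_le_coverNum hδ.1 hcf
  have hlog : 0 ≤ Real.log (coverNum (G f) δ) := Real.log_nonneg h1
  have hneg : 0 < -Real.log δ := by
    have := Real.log_neg hδ.1 hδ.2
    linarith
  positivity

lemma ev_le_three {f : ℝ → ℝ} (hcf : Continuous f) :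
    ∀ᶠ δ in nhdsWithin (0:ℝ) (Set.Ioi 0),
      Real.log (coverNum (G f) δ) / -Real.log δ ≤ 3 := by
  set B := osc f 1 0 with hB
  have hB0 : 0 ≤ B := osc_nonneg one_pos hcf (by rw [Nat.ceil_pos]; norm_num)
  have hsmall := (tendsto_div_neg_log (Real.log (B+2))).eventually_le_const
    (by norm_num : (0:ℝ) < 1)
  filter_upwards [ev_Ioo, hsmall] with δ hδ hsm
  have hneg : 0 < -Real.log δ := by
    have := Real.log_neg hδ.1 hδ.2
    linarith
  have h1 : (1:ℝ) ≤ (coverNum (G f) δ : ℝ) := by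
    exact_mod_cast one_le_coverNum hδ.1 hcf
  have h2 : (coverNum (G f) δ : ℝ) ≤ (B+2)/δ^2 := coverNum_le_poly hδ.1 hδ.2.le hcf
  have hδ2 : (0:ℝ) < δ^2 := pow_pos hδ.1 2
  have hlog1 : Real.log (coverNum (G f) δ) ≤ Real.log ((B+2)/δ^2) :=
    Real.log_le_log (by linarith) h2
  have hlog2 : Real.log ((B+2)/δ^2) = Real.log (B+2) - 2*Real.log δ := by
    rw [Real.log_div (by linarith) (ne_of_gt hδ2), Real.log_pow]
    push_cast
    ring
  have hlne : Real.log δ ≠ 0 := ne_of_lt (by linarith)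
  have hkey : Real.log (coverNum (G f) δ) / -Real.log δ
      ≤ (Real.log (B+2) - 2*Real.log δ) / -Real.log δ :=
    (div_le_div_iff_of_pos_right hneg).2 (hlog1.trans (le_of_eq hlog2))
  have hstep : (Real.log (B+2) - 2*Real.log δ)/(-Real.log δ)
      = Real.log (B+2)/(-Real.log δ) + 2 := by
    field_simp
    ring
  calc Real.log (coverNum (G f) δ) / -Real.log δ
      ≤ (Real.log (B+2) - 2*Real.log δ) / -Real.log δ := hkey
    _ = Real.log (B+2)/(-Real.log δ) + 2 := hstep
    _ ≤ 1 + 2 := by linarith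
    _ = 3 := by norm_num

lemma upperBoxDim_G_le {f g h : ℝ → ℝ} (hcf : Continuous f) (hcg : Continuous g)
    (hch : Continuous h) {L : ℝ} (hL : 1 ≤ L)
    (hlip : ∀ x ∈ Icc (0:ℝ) 1, ∀ y ∈ Icc (0:ℝ) 1,
      |h x - h y| ≤ L*(|f x - f y| + |g x - g y|)) :
    upperBoxDim (G h) ≤ max (upperBoxDim (G f)) (upperBoxDim (G g)) := by
  classical
  unfold upperBoxDim
  set F := nhdsWithin (0:ℝ) (Set.Ioi 0) with hF
  set u := fun δ : ℝ => Real.log (coverNum (G h) δ) / -Real.log δ with hu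
  set vf := fun δ : ℝ => Real.log (coverNum (G f) δ) / -Real.log δ with hvf
  set vg := fun δ : ℝ => Real.log (coverNum (G g) δ) / -Real.log δ with hvg
  have hcobu : F.IsCoboundedUnder (· ≤ ·) u :=
    Filter.isCoboundedUnder_le_of_eventually_le F (ev_nonneg hch)
  have hcobf : F.IsCoboundedUnder (· ≤ ·) vf :=
    Filter.isCoboundedUnder_le_of_eventually_le F (ev_nonneg hcf)
  have hcobg : F.IsCoboundedUnder (· ≤ ·) vg :=
    Filter.isCoboundedUnder_le_of_eventually_le F (ev_nonneg hcg)
  have hbdf : F.IsBoundedUnder (· ≤ ·) vf :=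
    Filter.isBoundedUnder_of_eventually_le (ev_le_three hcf)
  have hbdg : F.IsBoundedUnder (· ≤ ·) vg :=
    Filter.isBoundedUnder_of_eventually_le (ev_le_three hcg)
  have hbmax : F.IsBoundedUnder (· ≤ ·) (fun δ => max (vf δ) (vg δ)) :=
    hbdf.sup hbdg
  have hcobmax : F.IsCoboundedUnder (· ≤ ·) (fun δ => max (vf δ) (vg δ)) :=
    Filter.isCoboundedUnder_le_of_eventually_le F
      ((ev_nonneg hcf).mono (fun δ h1 => le_trans h1 (le_max_left _ _)))
  -- key pointwise inequality
  have hkey : ∀ᶠ δ in F, u δ ≤ Real.log (20*L)/(-Real.log δ) + max (vf δ) (vg δ) := by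
    filter_upwards [ev_Ioo] with δ hδIoo
    obtain ⟨hδ0, hδ1⟩ := hδIoo
    have hneg : 0 < -Real.log δ := by
      have := Real.log_neg hδ0 hδ1
      linarith
    have hcmp := coverNum_compare hδ0 hcf hcg hch hL hlip
    set Nf := (coverNum (G f) δ : ℝ) with hNf
    set Ng := (coverNum (G g) δ : ℝ) with hNg
    set Nh := (coverNum (G h) δ : ℝ) with hNh
    have hNf1 : (1:ℝ) ≤ Nf := by rw [hNf]; exact_mod_cast one_le_coverNum hδ0 hcf
    have hNg1 : (1:ℝ) ≤ Ng := by rw [hNg]; exact_mod_cast one_le_coverNum hδ0 hcg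
    have hNh1 : (1:ℝ) ≤ Nh := by rw [hNh]; exact_mod_cast one_le_coverNum hδ0 hch
    have hM : Nh ≤ 20*L*max Nf Ng := by
      rcases le_total Nf Ng with hc | hc
      · rw [max_eq_right hc]; nlinarith
      · rw [max_eq_left hc]; nlinarith
    have hmax1 : (1:ℝ) ≤ max Nf Ng := le_trans hNf1 (le_max_left _ _)
    have hlogs : Real.log Nh ≤ Real.log (20*L) + max (Real.log Nf) (Real.log Ng) := by
      have h20 : (0:ℝ) < 20*L := by linarith
      calc Real.log Nh ≤ Real.log (20*L*max Nf Ng) := Real.log_le_log (by linarith) hM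
        _ = Real.log (20*L) + Real.log (max Nf Ng) :=
            Real.log_mul (ne_of_gt h20) (by linarith)
        _ = Real.log (20*L) + max (Real.log Nf) (Real.log Ng) := by
            rcases le_total Nf Ng with hc | hc
            · rw [max_eq_right hc, max_eq_right (Real.log_le_log (by linarith) hc)]
            · rw [max_eq_left hc, max_eq_left (Real.log_le_log (by linarith) hc)]
    have hdiv : u δ ≤ (Real.log (20*L) + max (Real.log Nf) (Real.log Ng))/(-Real.log δ) := by
      simp only [hu]
      exact (div_le_div_iff_of_pos_right hneg).2 hlogs
    calc u δ ≤ (Real.log (20*L) + max (Real.log Nf) (Real.log Ng))/(-Real.log δ) := hdiv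
      _ = Real.log (20*L)/(-Real.log δ) + (max (Real.log Nf) (Real.log Ng))/(-Real.log δ) := by
          ring
      _ = Real.log (20*L)/(-Real.log δ) + max (vf δ) (vg δ) := by
          congr 1
          simp only [hvf, hvg]
          rw [max_div_div_right hneg.le]
  -- conclude
  have main : ∀ ε : ℝ, 0 < ε →
      Filter.limsup u F ≤ max (Filter.limsup vf F) (Filter.limsup vg F) + ε := by
    intro ε hε
    have hsmall := (tendsto_div_neg_log (Real.log (20*L))).eventually_le_const hε
    have hev : u ≤ᶠ[F] fun δ => ε + max (vf δ) (vg δ) := by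
      filter_upwards [hkey, hsmall] with δ h1 h2
      linarith
    have hbdd2 : F.IsBoundedUnder (· ≤ ·) (fun δ => ε + max (vf δ) (vg δ)) := by
      obtain ⟨b, hb⟩ := hbmax
      exact ⟨ε + b, by
        simp only [Filter.eventually_map] at hb ⊢
        filter_upwards [hb] with δ hδ
        linarith⟩
    have h1 : Filter.limsup u F ≤ Filter.limsup (fun δ => ε + max (vf δ) (vg δ)) F :=
      Filter.limsup_le_limsup hev hcobu hbdd2
    have h2 : Filter.limsup (fun δ => ε + max (vf δ) (vg δ)) F
        = ε + Filter.limsup (fun δ => max (vf δ) (vg δ)) F :=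
      limsup_const_add F _ ε hbmax hcobmax
    have h3 : Filter.limsup (fun δ => max (vf δ) (vg δ)) F
        = max (Filter.limsup vf F) (Filter.limsup vg F) :=
      limsup_max hcobf hcobg hbdf hbdg
    rw [h2, h3] at h1
    linarith
  by_contra hcon
  push_neg at hcon
  have h2 := main ((Filter.limsup u F - max (Filter.limsup vf F) (Filter.limsup vg F))/2)
    (by linarith)
  linarith
end Dim

section Final

lemma graphC_eq (h : C(↥(Set.Icc (0:ℝ) 1), ℝ)) :
    graphC h = G (fun x => h (Set.projIcc 0 1 zero_le_one x)) := by
  ext p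
  constructor
  · rintro ⟨x, rfl⟩
    exact ⟨(x:ℝ), x.2, by simp [Set.projIcc_of_mem zero_le_one x.2]⟩
  · rintro ⟨x, hx, rfl⟩
    exact ⟨⟨x, hx⟩, by simp [Set.projIcc_of_mem zero_le_one hx]⟩

lemma adjoin_lip (f g P : C(↥(Set.Icc (0:ℝ) 1), ℝ))
    (hP : P ∈ Algebra.adjoin ℝ ({f, g} : Set C(↥(Set.Icc (0:ℝ) 1), ℝ))) :
    ∃ L : ℝ, 1 ≤ L ∧ ∀ x y : ↥(Set.Icc (0:ℝ) 1),
      |P x - P y| ≤ L*(|f x - f y| + |g x - g y|) := by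
  induction hP using Algebra.adjoin_induction with
  | mem q hq =>
    rcases hq with hq | hq
    · exact ⟨1, le_refl 1, fun x y => by
        rw [hq, one_mul]
        linarith [abs_nonneg (f x - f y), abs_nonneg (g x - g y)]⟩
    · simp only [Set.mem_singleton_iff] at hq
      exact ⟨1, le_refl 1, fun x y => by
        rw [hq, one_mul]
        linarith [abs_nonneg (f x - f y), abs_nonneg (g x - g y)]⟩
  | algebraMap r =>
    exact ⟨1, le_refl 1, fun x y => by
      have hr : ∀ z : ↥(Set.Icc (0:ℝ) 1),
          (algebraMap ℝ C(↥(Set.Icc (0:ℝ) 1), ℝ) r) z = r := fun z => rfl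
      rw [hr, hr, sub_self, abs_zero]
      positivity⟩
  | add p q hp hq hip hiq =>
    obtain ⟨L1, hL1, h1⟩ := hip
    obtain ⟨L2, hL2, h2⟩ := hiq
    refine ⟨L1 + L2, by linarith, fun x y => ?_⟩
    have := h1 x y
    have := h2 x y
    simp only [ContinuousMap.add_apply]
    calc |p x + q x - (p y + q y)| ≤ |p x - p y| + |q x - q y| := by
          rw [show p x + q x - (p y + q y) = (p x - p y) + (q x - q y) by ring]
          exact abs_add_le _ _
      _ ≤ (L1 + L2)*(|f x - f y| + |g x - g y|) := by nlinarith [abs_nonneg (f x - f y), abs_nonneg (g x - g y)]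
  | mul p q hp hq hip hiq =>
    obtain ⟨L1, hL1, h1⟩ := hip
    obtain ⟨L2, hL2, h2⟩ := hiq
    refine ⟨max 1 (‖p‖*L2 + ‖q‖*L1), le_max_left _ _, fun x y => ?_⟩
    have hp1 := h1 x y
    have hq1 := h2 x y
    have hpn := ContinuousMap.norm_coe_le_norm p x
    have hqn := ContinuousMap.norm_coe_le_norm q y
    have hpn0 : (0:ℝ) ≤ ‖p‖ := norm_nonneg _
    have hqn0 : (0:ℝ) ≤ ‖q‖ := norm_nonneg _
    have habs : (0:ℝ) ≤ |f x - f y| + |g x - g y| := by positivity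
    simp only [ContinuousMap.mul_apply]
    calc |p x * q x - p y * q y|
        = |p x * (q x - q y) + (p x - p y) * q y| := by ring_nf
      _ ≤ |p x * (q x - q y)| + |(p x - p y) * q y| := abs_add_le _ _
      _ = |p x| * |q x - q y| + |p x - p y| * |q y| := by rw [abs_mul, abs_mul]
      _ ≤ ‖p‖ * (L2*(|f x - f y| + |g x - g y|)) + (L1*(|f x - f y| + |g x - g y|)) * ‖q‖ := by
          have h3 : |p x| ≤ ‖p‖ := by
            simpa using hpn
          have h4 : |q y| ≤ ‖q‖ := by
            simpa using hqn
          have h5 : (0:ℝ) ≤ |p x| := abs_nonneg _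
          have h6 : (0:ℝ) ≤ |q y| := abs_nonneg _
          have h7 : (0:ℝ) ≤ |q x - q y| := abs_nonneg _
          have h8 : (0:ℝ) ≤ |p x - p y| := abs_nonneg _
          nlinarith
      _ = (‖p‖*L2 + ‖q‖*L1)*(|f x - f y| + |g x - g y|) := by ring
      _ ≤ (max 1 (‖p‖*L2 + ‖q‖*L1))*(|f x - f y| + |g x - g y|) :=
          mul_le_mul_of_nonneg_right (le_max_right _ _) habs


theorem upperBoxDim_graph_polynomial (f g P : C(↥(Set.Icc (0:ℝ) 1), ℝ))
    (hP : P ∈ Algebra.adjoin ℝ ({f, g} : Set C(↥(Set.Icc (0:ℝ) 1), ℝ))) :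
    upperBoxDim (graphC P) ≤ max (upperBoxDim (graphC f)) (upperBoxDim (graphC g)) := by
  obtain ⟨L, hL, hlip⟩ := adjoin_lip f g P hP
  rw [graphC_eq f, graphC_eq g, graphC_eq P]
  refine upperBoxDim_G_le (f.continuous.comp continuous_projIcc)
    (g.continuous.comp continuous_projIcc) (P.continuous.comp continuous_projIcc) hL ?_
  intro x hx y hy
  have := hlip ⟨x, hx⟩ ⟨y, hy⟩
  simpa [Set.projIcc_of_mem zero_le_one hx, Set.projIcc_of_mem zero_le_one hy] using this
end Final
end

section
/- For continuous f, g : [0,1] → ℝ with f nonvanishing, if h = f·g then dim_B̄ G(g) ≤ max{dim_B̄ G(h), dim_B̄ G(f)}. -/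
open Set Filter Metric
open scoped ENNReal

noncomputable def oscS (u : ℝ → ℝ) (s : Set ℝ) : ℝ := sSup (u '' s) - sInf (u '' s)

lemma le_oscS_of_mem {u : ℝ → ℝ} {s : Set ℝ} (hA : BddAbove (u '' s)) (hB : BddBelow (u '' s))
    {x y : ℝ} (hx : x ∈ s) (hy : y ∈ s) : u x - u y ≤ oscS u s :=
  sub_le_sub (le_csSup hA ⟨x, hx, rfl⟩) (csInf_le hB ⟨y, hy, rfl⟩)

lemma oscS_nonneg {u : ℝ → ℝ} {s : Set ℝ} (hne : s.Nonempty) (hA : BddAbove (u '' s))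
    (hB : BddBelow (u '' s)) : 0 ≤ oscS u s := by
  obtain ⟨x, hx⟩ := hne
  have := le_oscS_of_mem hA hB hx hx
  linarith

lemma oscS_le {u : ℝ → ℝ} {s : Set ℝ} {d : ℝ} (hne : s.Nonempty)
    (h : ∀ x ∈ s, ∀ y ∈ s, u x - u y ≤ d) : oscS u s ≤ d := by
  have h1 : sSup (u '' s) ≤ sInf (u '' s) + d := by
    apply csSup_le (hne.image u)
    rintro v ⟨x, hx, rfl⟩
    have : u x - d ≤ sInf (u '' s) := by
      apply le_csInf (hne.image u)
      rintro w ⟨y, hy, rfl⟩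
      linarith [h x hx y hy]
    linarith
  rw [oscS]; linarith

lemma mem_Icc_inf_sup {u : ℝ → ℝ} {s : Set ℝ} (hA : BddAbove (u '' s)) (hB : BddBelow (u '' s))
    {x : ℝ} (hx : x ∈ s) : u x ∈ Icc (sInf (u '' s)) (sSup (u '' s)) :=
  ⟨csInf_le hB ⟨x, hx, rfl⟩, le_csSup hA ⟨x, hx, rfl⟩⟩

/-- the i-th column of a grid with n columns -/
def col (n i : ℕ) : Set ℝ := Icc ((i:ℝ)/n) (((i:ℝ)+1)/n)

lemma col_subset {n i : ℕ} (hn : 0 < n) (hi : i < n) : col n i ⊆ Icc (0:ℝ) 1 := by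
  have hn' : (0:ℝ) < n := by exact_mod_cast hn
  apply Icc_subset_Icc
  · positivity
  · rw [div_le_one hn']
    have : (i:ℝ) + 1 ≤ n := by exact_mod_cast hi
    linarith

lemma col_nonempty {n i : ℕ} (hn : 0 < n) : (col n i).Nonempty := by
  have hn' : (0:ℝ) < n := by exact_mod_cast hn
  exact nonempty_Icc.2 (by gcongr <;> linarith)

lemma exists_col {n : ℕ} (hn : 0 < n) {x : ℝ} (hx : x ∈ Icc (0:ℝ) 1) :
    ∃ i < n, x ∈ col n i := by
  have hn' : (0:ℝ) < n := by exact_mod_cast hn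
  rcases lt_or_eq_of_le hx.2 with h1 | h1
  · refine ⟨⌊x * n⌋₊, ?_, ?_, ?_⟩
    · have hxn : x * n < n := by nlinarith [hx.1]
      have h0 : (0:ℝ) ≤ x * n := mul_nonneg hx.1 hn'.le
      exact (Nat.floor_lt h0).2 (by exact_mod_cast hxn)
    · rw [div_le_iff₀ hn']
      exact Nat.floor_le (mul_nonneg hx.1 hn'.le)
    · rw [le_div_iff₀ hn']
      exact (Nat.lt_floor_add_one (x * n)).le
  · have hc : ((n - 1 : ℕ) : ℝ) = (n:ℝ) - 1 := by
      have h1n : 1 ≤ n := hn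
      push_cast [h1n]; ring
    refine ⟨n - 1, by omega, ?_, ?_⟩
    · rw [hc, h1, div_le_one hn']; linarith
    · rw [h1, hc, le_div_iff₀ hn']; linarith

lemma img_facts {u : ℝ → ℝ} (hu : ContinuousOn u (Icc 0 1)) {n i : ℕ} (hn : 0 < n)
    (hi : i < n) :
    BddAbove (u '' col n i) ∧ BddBelow (u '' col n i) ∧ (u '' col n i).Nonempty := by
  have himg : IsCompact (u '' col n i) :=
    (isCompact_Icc).image_of_continuousOn (hu.mono (col_subset hn hi))
  exact ⟨himg.bddAbove, himg.bddBelow, (col_nonempty hn).image u⟩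

noncomputable def Scol (u : ℝ → ℝ) (δ : ℝ) : ℝ :=
  ∑ i ∈ Finset.range ⌈1/δ⌉₊, (oscS u (col ⌈1/δ⌉₊ i) / (2*δ) + 1)

lemma coverNum_le_Scol {u : ℝ → ℝ} (hu : ContinuousOn u (Icc 0 1)) {δ : ℝ}
    (h0 : 0 < δ) : (coverNum (G u) δ : ℝ) ≤ Scol u δ := by
  set n := ⌈1/δ⌉₊ with hndef
  have hn : 0 < n := Nat.ceil_pos.2 (by positivity)
  have hnn : (0:ℝ) < n := by exact_mod_cast hn
  have hceil : (1:ℝ)/δ ≤ n := Nat.le_ceil _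
  have hInvn : (1:ℝ)/n ≤ δ := by
    rw [div_le_iff₀ hnn]
    calc (1:ℝ) = δ * (1/δ) := by field_simp
    _ ≤ δ * n := by nlinarith
  set mi : ℕ → ℝ := fun i => sInf (u '' col n i) with hmi
  set Mi : ℕ → ℝ := fun i => sSup (u '' col n i) with hMi
  set K : ℕ → ℕ := fun i => ⌊(Mi i - mi i)/(2*δ)⌋₊ with hK
  set T : Finset (ℝ × ℝ) := (Finset.range n).biUnion (fun i =>
      (Finset.range (K i + 1)).image (fun k : ℕ => (((i:ℝ) + 1/2)/(n:ℝ), mi i + δ + 2*δ*(k:ℝ)))) with hT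
  have hcover : G u ⊆ ⋃ p ∈ T, Metric.closedBall p δ := by
    rintro _ ⟨x, hx, rfl⟩
    obtain ⟨i, hi, hxi⟩ := exists_col hn hx
    obtain ⟨hA, hB, hne⟩ := img_facts hu hn hi
    have hmem := mem_Icc_inf_sup hA hB hxi
    set k := ⌊(u x - mi i)/(2*δ)⌋₊ with hkdef
    have hknn : 0 ≤ (u x - mi i)/(2*δ) := div_nonneg (by linarith [hmem.1]) (by linarith)
    have hkK : k ≤ K i := by
      apply Nat.floor_le_floor
      have h2 : u x ≤ Mi i := hmem.2
      have h3 : mi i ≤ u x := hmem.1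
      gcongr
    have hfl : (k:ℝ) ≤ (u x - mi i)/(2*δ) := Nat.floor_le hknn
    have hfl2 : (u x - mi i)/(2*δ) < (k:ℝ) + 1 := Nat.lt_floor_add_one _
    have h2d : (0:ℝ) < 2*δ := by linarith
    apply Set.mem_biUnion (Finset.mem_biUnion.2
      ⟨i, Finset.mem_range.2 hi, Finset.mem_image.2 ⟨k, Finset.mem_range.2 (by omega), rfl⟩⟩)
    rw [← closedBall_prod_same]
    constructor
    · rw [Real.closedBall_eq_Icc]
      have hx1 : (i:ℝ)/n ≤ x := hxi.1
      have hx2 : x ≤ ((i:ℝ)+1)/n := hxi.2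
      have half : (1:ℝ)/(2*n) ≤ δ := by
        calc (1:ℝ)/(2*n) ≤ 1/n := by
              apply div_le_div_of_nonneg_left one_pos.le hnn; linarith
        _ ≤ δ := hInvn
      constructor
      · have : ((i:ℝ) + 1/2)/n - 1/(2*n) = (i:ℝ)/n := by field_simp; ring
        linarith [this ▸ (sub_le_sub_left half (((i:ℝ) + 1/2)/n))]
      · have : ((i:ℝ) + 1/2)/n + 1/(2*n) = ((i:ℝ)+1)/n := by field_simp; ring
        linarith [this ▸ (add_le_add_right half (((i:ℝ) + 1/2)/n))]
    · rw [Real.closedBall_eq_Icc]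
      have e1 : 2*δ*(k:ℝ) ≤ u x - mi i := by
        have := (le_div_iff₀ h2d).1 hfl; linarith
      have e2 : u x - mi i < 2*δ*((k:ℝ)+1) := by
        have := (div_lt_iff₀ h2d).1 hfl2; linarith
      constructor <;> [skip; skip] <;> simp only [] <;> nlinarith
  have hsetne : coverNum (G u) δ ≤ T.card := Nat.sInf_le ⟨T, rfl, hcover⟩
  have hcard : T.card ≤ ∑ i ∈ Finset.range n, (K i + 1) :=
    Finset.card_biUnion_le.trans (Finset.sum_le_sum fun i _ =>
      (Finset.card_image_le).trans_eq (Finset.card_range _))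
  have : (coverNum (G u) δ : ℝ) ≤ ∑ i ∈ Finset.range n, ((K i : ℝ) + 1) := by
    calc (coverNum (G u) δ : ℝ) ≤ (T.card : ℝ) := by exact_mod_cast hsetne
    _ ≤ _ := by exact_mod_cast hcard
  refine this.trans (Finset.sum_le_sum fun i hi => ?_)
  have : (K i : ℝ) ≤ (Mi i - mi i)/(2*δ) := Nat.floor_le (by
    obtain ⟨hA, hB, hne⟩ := img_facts hu hn (Finset.mem_range.1 hi)
    obtain ⟨y, hy⟩ := hne
    obtain ⟨x, hxc, hxy⟩ := hy
    have := mem_Icc_inf_sup hA hB hxc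
    apply div_nonneg _ (by linarith)
    simp only [hmi, hMi]; linarith [this.1, this.2])
  simp only [oscS, hMi, hmi] at *
  linarith

lemma coverSet_nonempty_s18 {u : ℝ → ℝ} (hu : ContinuousOn u (Icc 0 1)) {δ : ℝ} (h0 : 0 < δ) :
    {n : ℕ | ∃ t : Finset (ℝ × ℝ), t.card = n ∧ G u ⊆ ⋃ p ∈ t, Metric.closedBall p δ}.Nonempty := by
  have hcomp : IsCompact (G u) :=
    isCompact_Icc.image_of_continuousOn (continuousOn_id.prodMk hu)
  obtain ⟨t, htf, hcov⟩ := (totallyBounded_iff.1 hcomp.totallyBounded) δ h0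
  refine ⟨htf.toFinset.card, htf.toFinset, rfl, fun z hz => ?_⟩
  obtain ⟨y, hy, hzy⟩ := mem_iUnion₂.1 (hcov hz)
  exact mem_biUnion (htf.mem_toFinset.2 hy) (ball_subset_closedBall hzy)

lemma Scol_le {u : ℝ → ℝ} (hu : ContinuousOn u (Icc 0 1)) {δ : ℝ}
    (h0 : 0 < δ) (h1 : δ ≤ 1) : Scol u δ ≤ 12 * (coverNum (G u) δ : ℝ) := by
  classical
  set n := ⌈1/δ⌉₊ with hndef
  have hn : 0 < n := Nat.ceil_pos.2 (by positivity)
  have hnn : (0:ℝ) < n := by exact_mod_cast hn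
  have hnle : (n:ℝ) ≤ 1/δ + 1 := (Nat.ceil_lt_add_one (by positivity)).le
  have hnd : (n:ℝ) * δ ≤ 2 := by
    have : (1/δ + 1) * δ ≤ 2 := by field_simp; linarith
    nlinarith
  obtain ⟨t, htcard, hcov⟩ := Nat.sInf_mem (coverSet_nonempty_s18 hu h0)
  set P : ℕ → ℝ × ℝ → Prop := fun i p => ∃ x ∈ col n i, (x, u x) ∈ Metric.closedBall p δ
    with hP
  set ti : ℕ → Finset (ℝ × ℝ) := fun i => t.filter (P i) with hti
  -- each column piece needs at least 1 and at least osc/(2δ) balls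
  have key : ∀ i ∈ Finset.range n, oscS u (col n i) / (2*δ) + 1 ≤ 2 * ((ti i).card : ℝ) := by
    intro i hi
    have hi' := Finset.mem_range.1 hi
    obtain ⟨hA, hB, hne⟩ := img_facts hu hn hi'
    -- find covering ball for each point of the column graph
    have hfind : ∀ x ∈ col n i, ∃ p ∈ ti i, (x, u x) ∈ Metric.closedBall p δ := by
      intro x hx
      have hx01 : x ∈ Icc (0:ℝ) 1 := col_subset hn hi' hx
      have : (x, u x) ∈ G u := ⟨x, hx01, rfl⟩
      obtain ⟨p, hp, hball⟩ := mem_iUnion₂.1 (hcov this)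
      exact ⟨p, Finset.mem_filter.2 ⟨hp, ⟨x, hx, hball⟩⟩, hball⟩
    -- cardinality at least one
    obtain ⟨x₀, hx₀⟩ := col_nonempty (i := i) hn
    obtain ⟨p₀, hp₀, _⟩ := hfind x₀ hx₀
    have hone : 1 ≤ ((ti i).card : ℝ) := by
      have : 0 < (ti i).card := Finset.card_pos.2 ⟨p₀, hp₀⟩
      exact_mod_cast this
    -- measure bound
    have himg : u '' col n i = Icc (sInf (u '' col n i)) (sSup (u '' col n i)) := by
      apply ContinuousOn.image_Icc
      · exact (col_nonempty (i := i) hn).some_mem.1.trans (col_nonempty (i := i) hn).some_mem.2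
      · exact hu.mono (col_subset hn hi')
    have hsub : Icc (sInf (u '' col n i)) (sSup (u '' col n i)) ⊆
        ⋃ p ∈ ti i, Icc (p.2 - δ) (p.2 + δ) := by
      rw [← himg]
      rintro _ ⟨x, hx, rfl⟩
      obtain ⟨p, hp, hball⟩ := hfind x hx
      have hd : dist (u x) p.2 ≤ δ := by
        have := mem_closedBall.1 hball
        rw [Prod.dist_eq] at this
        exact le_trans (le_max_right _ _) this
      rw [Real.dist_eq, abs_le] at hd
      exact mem_iUnion₂.2 ⟨p, hp, by constructor <;> linarith [hd.1, hd.2]⟩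
    have hmes : ENNReal.ofReal (sSup (u '' col n i) - sInf (u '' col n i)) ≤
        ((ti i).card : ℝ≥0∞) * ENNReal.ofReal (2*δ) := by
      calc ENNReal.ofReal (sSup (u '' col n i) - sInf (u '' col n i))
          = MeasureTheory.volume (Icc (sInf (u '' col n i)) (sSup (u '' col n i))) := by
            rw [Real.volume_Icc]
        _ ≤ MeasureTheory.volume (⋃ p ∈ ti i, Icc (p.2 - δ) (p.2 + δ)) :=
            MeasureTheory.measure_mono hsub
        _ ≤ ∑ p ∈ ti i, MeasureTheory.volume (Icc (p.2 - δ) (p.2 + δ)) :=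
            MeasureTheory.measure_biUnion_finset_le _ _
        _ = ∑ _p ∈ ti i, ENNReal.ofReal (2*δ) := by
            apply Finset.sum_congr rfl
            intro p _
            rw [Real.volume_Icc]
            congr 1; ring
        _ = ((ti i).card : ℝ≥0∞) * ENNReal.ofReal (2*δ) := by
            rw [Finset.sum_const, nsmul_eq_mul]
    have hreal : sSup (u '' col n i) - sInf (u '' col n i) ≤ ((ti i).card : ℝ) * (2*δ) := by
      have h2 : ENNReal.ofReal (((ti i).card : ℝ) * (2*δ)) =
          ((ti i).card : ℝ≥0∞) * ENNReal.ofReal (2*δ) := by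
        rw [ENNReal.ofReal_mul (Nat.cast_nonneg _ : (0:ℝ) ≤ ((ti i).card : ℝ)),
          ENNReal.ofReal_natCast]
      rw [← h2] at hmes
      exact (ENNReal.ofReal_le_ofReal_iff (mul_nonneg (Nat.cast_nonneg _) (by linarith))).1 hmes
    have hosc : oscS u (col n i) / (2*δ) ≤ ((ti i).card : ℝ) := by
      rw [div_le_iff₀ (by linarith)]
      simpa [oscS] using hreal
    linarith
  -- double counting of the filtered families
  have hdouble : ∑ i ∈ Finset.range n, ((ti i).card) ≤ 6 * t.card := by
    have hswap : ∑ i ∈ Finset.range n, ((ti i).card) =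
        ∑ p ∈ t, ((Finset.range n).filter (fun i => P i p)).card := by
      simp only [hti, Finset.card_filter]
      exact Finset.sum_comm
    rw [hswap]
    have hbd : ∀ p ∈ t, ((Finset.range n).filter (fun i => P i p)).card ≤ 6 := by
      intro p _
      set S := (Finset.range n).filter (fun i => P i p) with hS
      rcases S.eq_empty_or_nonempty with hE | hNE
      · simp [hE]
      · set j := S.min' hNE with hj
        have hjS : j ∈ S := S.min'_mem hNE
        have hsub : S ⊆ Finset.Icc j (j + 5) := by
          intro i hiS
          obtain ⟨xi, hxi, hballi⟩ := (Finset.mem_filter.1 hiS).2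
          obtain ⟨xj, hxj, hballj⟩ := (Finset.mem_filter.1 hjS).2
          have hdi : |xi - p.1| ≤ δ := by
            have := mem_closedBall.1 hballi
            rw [Prod.dist_eq] at this
            have := le_trans (le_max_left _ _) this
            rwa [Real.dist_eq] at this
          have hdj : |xj - p.1| ≤ δ := by
            have := mem_closedBall.1 hballj
            rw [Prod.dist_eq] at this
            have := le_trans (le_max_left _ _) this
            rwa [Real.dist_eq] at this
          rw [abs_le] at hdi hdj
          have hi1 : (i:ℝ)/n ≤ xi := hxi.1
          have hj2 : xj ≤ ((j:ℝ)+1)/n := hxj.2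
          -- i/n ≤ xi ≤ p1 + δ ≤ xj + 2δ ≤ (j+1)/n + 2δ
          have hchain : (i:ℝ)/n ≤ ((j:ℝ)+1)/n + 2*δ := by
            linarith [hdi.2, hdj.1]
          have hir : (i:ℝ) ≤ (j:ℝ) + 1 + 2*δ*n := by
            rw [div_le_iff₀ hnn] at hchain
            have : (((j:ℝ)+1)/n) * n = (j:ℝ) + 1 := by field_simp
            nlinarith [hchain]
          have : (i:ℝ) ≤ (j:ℝ) + 5 := by nlinarith [hnd]
          have hij : i ≤ j + 5 := by exact_mod_cast this
          exact Finset.mem_Icc.2 ⟨S.min'_le i hiS, hij⟩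
        calc S.card ≤ (Finset.Icc j (j+5)).card := Finset.card_le_card hsub
          _ = 6 := by rw [Nat.card_Icc]; omega
    calc ∑ p ∈ t, ((Finset.range n).filter (fun i => P i p)).card
        ≤ ∑ p ∈ t, 6 := Finset.sum_le_sum hbd
      _ = 6 * t.card := by rw [Finset.sum_const]; ring
  -- combine
  have : Scol u δ ≤ ∑ i ∈ Finset.range n, 2 * ((ti i).card : ℝ) :=
    Finset.sum_le_sum key
  calc Scol u δ ≤ ∑ i ∈ Finset.range n, 2 * ((ti i).card : ℝ) := this
    _ = 2 * ((∑ i ∈ Finset.range n, (ti i).card : ℕ) : ℝ) := by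
        rw [← Finset.mul_sum]; push_cast; ring
    _ ≤ 2 * ((6 * t.card : ℕ) : ℝ) := by
        have h6 : ((∑ i ∈ Finset.range n, (ti i).card : ℕ) : ℝ) ≤ ((6 * t.card : ℕ) : ℝ) := by
          exact_mod_cast hdouble
        linarith
    _ = 12 * (coverNum (G u) δ : ℝ) := by
        unfold coverNum
        rw [← htcard]; push_cast; ring

lemma abs_sub_le_oscS {u : ℝ → ℝ} {s : Set ℝ} (hA : BddAbove (u '' s)) (hB : BddBelow (u '' s))
    {x y : ℝ} (hx : x ∈ s) (hy : y ∈ s) : |u x - u y| ≤ oscS u s :=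
  abs_sub_le_iff.2 ⟨le_oscS_of_mem hA hB hx hy, le_oscS_of_mem hA hB hy hx⟩

lemma oscS_mono {u : ℝ → ℝ} {s t : Set ℝ} (hsub : s ⊆ t) (hs : s.Nonempty)
    (hA : BddAbove (u '' t)) (hB : BddBelow (u '' t)) : oscS u s ≤ oscS u t :=
  sub_le_sub (csSup_le_csSup hA (hs.image u) (image_mono hsub))
    (csInf_le_csInf hB (hs.image u) (image_mono hsub))

lemma oscS_factor {f g : ℝ → ℝ} {s : Set ℝ} (hs : s.Nonempty) {m B : ℝ} (hm : 0 < m)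
    (hfm : ∀ x ∈ s, m ≤ |f x|) (hB : ∀ x ∈ s, |f x * g x| ≤ B)
    (hAh : BddAbove ((f*g) '' s)) (hBh : BddBelow ((f*g) '' s))
    (hAf : BddAbove (f '' s)) (hBf : BddBelow (f '' s)) :
    oscS g s ≤ oscS (f*g) s / m + B * oscS f s / m^2 := by
  apply oscS_le hs
  intro x hx y hy
  have hfx := hfm x hx
  have hfy := hfm y hy
  have hfx0 : f x ≠ 0 := by intro e; rw [e] at hfx; simp at hfx; linarith
  have hfy0 : f y ≠ 0 := by intro e; rw [e] at hfy; simp at hfy; linarith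
  have h1 : |f x * g x - f y * g y| ≤ oscS (f*g) s := by
    have := abs_sub_le_oscS hAh hBh hx hy
    simpa [Pi.mul_apply] using this
  have h2 : |f y - f x| ≤ oscS f s := abs_sub_le_oscS hAf hBf hy hx
  have hBx : |f x * g x| ≤ B := hB x hx
  have hB0 : 0 ≤ B := le_trans (abs_nonneg _) hBx
  have hid : g x - g y = (f x * g x - f y * g y)/(f y) + (f x * g x) * (f y - f x)/(f x * f y) := by
    field_simp
    ring
  rw [hid]
  have e1 : (f x * g x - f y * g y)/(f y) ≤ oscS (f*g) s / m := by
    calc (f x * g x - f y * g y)/(f y) ≤ |(f x * g x - f y * g y)/(f y)| := le_abs_self _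
    _ = |f x * g x - f y * g y|/|f y| := abs_div _ _
    _ ≤ oscS (f*g) s / m := div_le_div₀ (oscS_nonneg hs hAh hBh) h1 hm hfy
  have e2 : (f x * g x) * (f y - f x)/(f x * f y) ≤ B * oscS f s / m^2 := by
    calc (f x * g x) * (f y - f x)/(f x * f y)
        ≤ |(f x * g x) * (f y - f x)/(f x * f y)| := le_abs_self _
    _ = |f x * g x| * |f y - f x| / |f x * f y| := by rw [abs_div, abs_mul]
    _ ≤ B * oscS f s / m^2 := by
        apply div_le_div₀ (mul_nonneg hB0 (oscS_nonneg hs hAf hBf))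
          (mul_le_mul hBx h2 (abs_nonneg _) hB0) (pow_pos hm 2)
        rw [abs_mul, sq]
        exact mul_le_mul hfx hfy hm.le (abs_nonneg _)
  linarith

lemma coverNum_pos {u : ℝ → ℝ} (hu : ContinuousOn u (Icc 0 1)) {δ : ℝ} (h0 : 0 < δ) :
    1 ≤ coverNum (G u) δ := by
  obtain ⟨t, ht, hcov⟩ := Nat.sInf_mem (coverSet_nonempty_s18 hu h0)
  rcases Nat.eq_zero_or_pos (coverNum (G u) δ) with h0' | h1
  · exfalso
    have htc : t.card = 0 := by rw [ht]; exact h0'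
    rw [Finset.card_eq_zero] at htc
    subst htc
    have hmem : ((0:ℝ), u 0) ∈ G u := ⟨0, ⟨le_refl 0, zero_le_one⟩, rfl⟩
    have := hcov hmem
    simp at this
  · exact h1

lemma full_img_facts {u : ℝ → ℝ} (hu : ContinuousOn u (Icc 0 1)) :
    BddAbove (u '' Icc 0 1) ∧ BddBelow (u '' Icc 0 1) := by
  have himg : IsCompact (u '' Icc 0 1) := isCompact_Icc.image_of_continuousOn hu
  exact ⟨himg.bddAbove, himg.bddBelow⟩

lemma ratio_nonneg {u : ℝ → ℝ} (hu : ContinuousOn u (Icc 0 1)) :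
    ∀ᶠ δ in nhdsWithin (0:ℝ) (Set.Ioi 0),
      0 ≤ Real.log (coverNum (G u) δ) / -Real.log δ := by
  filter_upwards [Ioo_mem_nhdsGT_of_mem (by norm_num : (0:ℝ) ∈ Ico (0:ℝ) 1)] with δ hδ
  have hN : (1:ℝ) ≤ (coverNum (G u) δ : ℝ) := by exact_mod_cast coverNum_pos hu hδ.1
  have : Real.log δ < 0 := Real.log_neg hδ.1 hδ.2
  exact div_nonneg (Real.log_nonneg hN) (by linarith)

lemma ratio_bdd {u : ℝ → ℝ} (hu : ContinuousOn u (Icc 0 1)) :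
    ∃ R : ℝ, ∀ᶠ δ in nhdsWithin (0:ℝ) (Set.Ioi 0),
      Real.log (coverNum (G u) δ) / -Real.log δ ≤ R := by
  obtain ⟨hA, hB⟩ := full_img_facts hu
  set O := oscS u (Icc 0 1) with hOdef
  have hO0 : 0 ≤ O := oscS_nonneg (nonempty_Icc.2 zero_le_one) hA hB
  refine ⟨Real.log (O + 2) / Real.log 2 + 2, ?_⟩
  filter_upwards [Ioo_mem_nhdsGT_of_mem (by norm_num : (0:ℝ) ∈ Ico (0:ℝ) (1/2))] with δ hδ
  obtain ⟨h0, hhalf⟩ := hδ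
  have h1 : δ ≤ 1 := by linarith
  set n := ⌈1/δ⌉₊ with hndef
  have hn : 0 < n := Nat.ceil_pos.2 (by positivity)
  have hnn : (0:ℝ) < n := by exact_mod_cast hn
  have hnle : (n:ℝ) ≤ 1/δ + 1 := (Nat.ceil_lt_add_one (by positivity)).le
  have hN : (coverNum (G u) δ : ℝ) ≤ (O + 2)/δ^2 := by
    refine (coverNum_le_Scol hu h0).trans ?_
    have hterm : ∀ i ∈ Finset.range n, oscS u (col n i)/(2*δ) + 1 ≤ O/(2*δ) + 1 := by
      intro i hi
      have hsub := col_subset hn (Finset.mem_range.1 hi)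
      have := oscS_mono hsub (col_nonempty hn) hA hB
      gcongr
    calc Scol u δ ≤ ∑ _i ∈ Finset.range n, (O/(2*δ) + 1) := Finset.sum_le_sum hterm
      _ = (n:ℝ) * (O/(2*δ) + 1) := by rw [Finset.sum_const, Finset.card_range, nsmul_eq_mul]
      _ ≤ (2/δ) * (O/(2*δ) + 1) := by
          have h2d : (n:ℝ) ≤ 2/δ := by
            have hinv : (1:ℝ) ≤ 1/δ := by rw [le_div_iff₀ h0]; linarith
            have h2e : (2:ℝ)/δ = 1/δ + 1/δ := by ring
            linarith
          have hpos : (0:ℝ) ≤ O/(2*δ) + 1 := by positivity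
          nlinarith
      _ ≤ (2/δ) * ((O+2)/(2*δ)) := by
          have : (1:ℝ) ≤ 2/(2*δ) := by rw [le_div_iff₀ (by linarith)]; linarith
          have : O/(2*δ) + 1 ≤ (O+2)/(2*δ) := by
            rw [div_add' _ _ _ (by positivity : (2*δ) ≠ 0)]
            gcongr
            linarith
          have h2 : (0:ℝ) ≤ 2/δ := by positivity
          nlinarith
      _ = (O+2)/δ^2 := by field_simp
  have hNpos : (1:ℝ) ≤ (coverNum (G u) δ : ℝ) := by exact_mod_cast coverNum_pos hu h0
  have hlog : Real.log (coverNum (G u) δ) ≤ Real.log (O+2) - 2 * Real.log δ := by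
    have hlogle := Real.log_le_log (by linarith) hN
    rw [Real.log_div (by linarith) (by positivity), Real.log_pow] at hlogle
    push_cast at hlogle
    linarith
  have hld : Real.log 2 ≤ -Real.log δ := by
    have hlt : Real.log δ ≤ Real.log (1/2) := Real.log_le_log h0 hhalf.le
    rw [Real.log_div one_ne_zero two_ne_zero, Real.log_one] at hlt
    linarith
  have l2 : 0 < Real.log 2 := Real.log_pos one_lt_two
  have hpos : 0 < -Real.log δ := lt_of_lt_of_le l2 hld
  have lO : Real.log 2 ≤ Real.log (O+2) := Real.log_le_log two_pos (by linarith)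
  rw [div_le_iff₀ hpos]
  have key : Real.log (O+2) ≤ (Real.log (O+2)/Real.log 2) * (-Real.log δ) := by
    rw [div_mul_eq_mul_div, le_div_iff₀ l2]
    nlinarith
  nlinarith [key, hlog]

theorem upperBoxDim_graph_factor (f g : ℝ → ℝ)
    (hf : ContinuousOn f (Set.Icc 0 1)) (hg : ContinuousOn g (Set.Icc 0 1))
    (hne : ∀ x ∈ Set.Icc (0:ℝ) 1, f x ≠ 0) :
    upperBoxDim (G g) ≤ max (upperBoxDim (G (f * g))) (upperBoxDim (G f)) := by
  classical
  have hh : ContinuousOn (f * g) (Set.Icc 0 1) := hf.mul hg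
  have hIne : (Icc (0:ℝ) 1).Nonempty := nonempty_Icc.2 zero_le_one
  obtain ⟨x₀, hx₀, hmin⟩ := isCompact_Icc.exists_isMinOn hIne hf.abs
  set m := |f x₀| with hmdef
  have hm0 : 0 < m := abs_pos.2 (hne x₀ hx₀)
  have hfm : ∀ x ∈ Icc (0:ℝ) 1, m ≤ |f x| := fun x hx => (isMinOn_iff.1 hmin) x hx
  obtain ⟨x₁, hx₁, hmax⟩ := isCompact_Icc.exists_isMaxOn hIne hh.abs
  set B := |(f*g) x₁| with hBdef
  have hBb : ∀ x ∈ Icc (0:ℝ) 1, |f x * g x| ≤ B := fun x hx => (isMaxOn_iff.1 hmax) x hx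
  set C := max 1 (max (1/m) (B/m^2)) with hCdef
  have hC1 : (1:ℝ) ≤ C := le_max_left _ _
  have hC0 : (0:ℝ) < C := lt_of_lt_of_le one_pos hC1
  set K := 24 * C with hKdef
  have hKpos : (0:ℝ) < K := by positivity
  have hK1 : (1:ℝ) ≤ K := by nlinarith
  -- cover number comparison
  have hcomp : ∀ δ : ℝ, 0 < δ → δ ≤ 1 →
      (coverNum (G g) δ : ℝ) ≤
        K * max (coverNum (G (f*g)) δ : ℝ) (coverNum (G f) δ : ℝ) := by
    intro δ h0 h1
    set n := ⌈1/δ⌉₊ with hndef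
    have hn : 0 < n := Nat.ceil_pos.2 (by positivity)
    have hd : (0:ℝ) < 2*δ := by linarith
    have hcol : ∀ i ∈ Finset.range n,
        oscS g (col n i)/(2*δ) + 1 ≤
          C * (oscS (f*g) (col n i)/(2*δ) + 1) + C * (oscS f (col n i)/(2*δ) + 1) := by
      intro i hi
      have hi' := Finset.mem_range.1 hi
      have hsub := col_subset hn hi'
      obtain ⟨hAh, hBh, _⟩ := img_facts hh hn hi'
      obtain ⟨hAf, hBf, _⟩ := img_facts hf hn hi'
      have hosc := oscS_factor (col_nonempty hn) hm0 (fun x hx => hfm x (hsub hx))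
        (fun x hx => hBb x (hsub hx)) hAh hBh hAf hBf
      have hoh : 0 ≤ oscS (f*g) (col n i) := oscS_nonneg (col_nonempty hn) hAh hBh
      have hof : 0 ≤ oscS f (col n i) := oscS_nonneg (col_nonempty hn) hAf hBf
      have hmC : 1/m ≤ C := le_trans (le_max_left _ _) (le_max_right _ _)
      have hBC : B/m^2 ≤ C := le_trans (le_max_right _ _) (le_max_right _ _)
      have t1 : oscS (f*g) (col n i)/m ≤ C * oscS (f*g) (col n i) := by
        calc oscS (f*g) (col n i)/m = (1/m) * oscS (f*g) (col n i) := by ring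
        _ ≤ C * oscS (f*g) (col n i) := mul_le_mul_of_nonneg_right hmC hoh
      have t2 : B * oscS f (col n i)/m^2 ≤ C * oscS f (col n i) := by
        calc B * oscS f (col n i)/m^2 = (B/m^2) * oscS f (col n i) := by ring
        _ ≤ C * oscS f (col n i) := mul_le_mul_of_nonneg_right hBC hof
      have hsum : oscS g (col n i) ≤ C * oscS (f*g) (col n i) + C * oscS f (col n i) := by
        linarith
      have hdiv : oscS g (col n i)/(2*δ) ≤
          (C * oscS (f*g) (col n i) + C * oscS f (col n i))/(2*δ) := by gcongr
      have hexp : (C * oscS (f*g) (col n i) + C * oscS f (col n i))/(2*δ) =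
          C * (oscS (f*g) (col n i)/(2*δ)) + C * (oscS f (col n i)/(2*δ)) := by ring
      have hfin : C * (oscS (f*g) (col n i)/(2*δ) + 1) + C * (oscS f (col n i)/(2*δ) + 1) =
          C * (oscS (f*g) (col n i)/(2*δ)) + C * (oscS f (col n i)/(2*δ)) + 2*C := by ring
      rw [hfin]
      rw [hexp] at hdiv
      linarith
    have hgsum : (coverNum (G g) δ : ℝ) ≤ C * Scol (f*g) δ + C * Scol f δ := by
      refine (coverNum_le_Scol hg h0).trans ?_
      have : Scol g δ ≤ ∑ i ∈ Finset.range n,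
          (C * (oscS (f*g) (col n i)/(2*δ) + 1) + C * (oscS f (col n i)/(2*δ) + 1)) :=
        Finset.sum_le_sum hcol
      refine this.trans ?_
      rw [Finset.sum_add_distrib, ← Finset.mul_sum, ← Finset.mul_sum]
      exact le_of_eq rfl
    have hhb := Scol_le hh h0 h1
    have hfb := Scol_le hf h0 h1
    have hmaxh : (coverNum (G (f*g)) δ : ℝ) ≤
        max (coverNum (G (f*g)) δ : ℝ) (coverNum (G f) δ : ℝ) := le_max_left _ _
    have hmaxf : (coverNum (G f) δ : ℝ) ≤
        max (coverNum (G (f*g)) δ : ℝ) (coverNum (G f) δ : ℝ) := le_max_right _ _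
    calc (coverNum (G g) δ : ℝ) ≤ C * Scol (f*g) δ + C * Scol f δ := hgsum
      _ ≤ C * (12 * max (coverNum (G (f*g)) δ : ℝ) (coverNum (G f) δ : ℝ))
          + C * (12 * max (coverNum (G (f*g)) δ : ℝ) (coverNum (G f) δ : ℝ)) := by
          gcongr <;> [exact hhb.trans (by linarith); exact hfb.trans (by linarith)]
      _ = K * max (coverNum (G (f*g)) δ : ℝ) (coverNum (G f) δ : ℝ) := by
          rw [hKdef]; ring
  -- limsup argument
  obtain ⟨Rh, hRh⟩ := ratio_bdd hh
  obtain ⟨Rf, hRf⟩ := ratio_bdd hf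
  have hBUh : IsBoundedUnder (· ≤ ·) (nhdsWithin (0:ℝ) (Set.Ioi 0))
      (fun δ : ℝ => Real.log (coverNum (G (f*g)) δ) / -Real.log δ) := ⟨Rh, eventually_map.2 hRh⟩
  have hBUf : IsBoundedUnder (· ≤ ·) (nhdsWithin (0:ℝ) (Set.Ioi 0))
      (fun δ : ℝ => Real.log (coverNum (G f) δ) / -Real.log δ) := ⟨Rf, eventually_map.2 hRf⟩
  have hCob : IsCoboundedUnder (· ≤ ·) (nhdsWithin (0:ℝ) (Set.Ioi 0))
      (fun δ : ℝ => Real.log (coverNum (G g) δ) / -Real.log δ) := by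
    have hb : IsBoundedUnder (· ≥ ·) (nhdsWithin (0:ℝ) (Set.Ioi 0))
        (fun δ : ℝ => Real.log (coverNum (G g) δ) / -Real.log δ) :=
      ⟨0, eventually_map.2 (ratio_nonneg hg)⟩
    exact hb.isCoboundedUnder_le
  apply le_of_forall_pos_le_add
  intro ε hε
  have hevh : ∀ᶠ δ in nhdsWithin (0:ℝ) (Set.Ioi 0),
      Real.log (coverNum (G (f*g)) δ) / -Real.log δ < upperBoxDim (G (f*g)) + ε/3 :=
    eventually_lt_of_limsup_lt (lt_add_of_pos_right _ (by linarith)) hBUh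
  have hevf : ∀ᶠ δ in nhdsWithin (0:ℝ) (Set.Ioi 0),
      Real.log (coverNum (G f) δ) / -Real.log δ < upperBoxDim (G f) + ε/3 :=
    eventually_lt_of_limsup_lt (lt_add_of_pos_right _ (by linarith)) hBUf
  set δ₁ := Real.exp (-(3 * Real.log K)/ε) with hδ₁def
  have hδ₁ : 0 < δ₁ := Real.exp_pos _
  have hlogK : 0 ≤ Real.log K := Real.log_nonneg hK1
  have hIoo : Ioo (0:ℝ) (min (1/2) δ₁) ∈ nhdsWithin (0:ℝ) (Set.Ioi 0) :=
    Ioo_mem_nhdsGT_of_mem ⟨le_refl 0, by positivity⟩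
  have hev : ∀ᶠ δ in nhdsWithin (0:ℝ) (Set.Ioi 0),
      Real.log (coverNum (G g) δ) / -Real.log δ ≤
        max (upperBoxDim (G (f*g))) (upperBoxDim (G f)) + ε := by
    filter_upwards [hevh, hevf, hIoo] with δ h_h h_f hδ
    obtain ⟨h0, hlt⟩ := hδ
    have hhalf : δ < 1/2 := lt_of_lt_of_le hlt (min_le_left _ _)
    have hδd : δ < δ₁ := lt_of_lt_of_le hlt (min_le_right _ _)
    have h1 : δ ≤ 1 := by linarith
    have hLd : 0 < -Real.log δ := by
      have := Real.log_neg h0 (by linarith : δ < 1); linarith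
    have hcmp := hcomp δ h0 h1
    have hNg1 : (1:ℝ) ≤ (coverNum (G g) δ : ℝ) := by exact_mod_cast coverNum_pos hg h0
    have hNh1 : (1:ℝ) ≤ (coverNum (G (f*g)) δ : ℝ) := by exact_mod_cast coverNum_pos hh h0
    have hNf1 : (1:ℝ) ≤ (coverNum (G f) δ : ℝ) := by exact_mod_cast coverNum_pos hf h0
    have hMx1 : (1:ℝ) ≤ max (coverNum (G (f*g)) δ : ℝ) (coverNum (G f) δ : ℝ) :=
      le_trans hNh1 (le_max_left _ _)
    have hlg : Real.log (coverNum (G g) δ) ≤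
        Real.log K + Real.log (max (coverNum (G (f*g)) δ : ℝ) (coverNum (G f) δ : ℝ)) := by
      calc Real.log (coverNum (G g) δ) ≤
          Real.log (K * max (coverNum (G (f*g)) δ : ℝ) (coverNum (G f) δ : ℝ)) :=
            Real.log_le_log (by linarith) hcmp
        _ = _ := Real.log_mul (ne_of_gt hKpos) (by linarith)
    have hlmax : Real.log (max (coverNum (G (f*g)) δ : ℝ) (coverNum (G f) δ : ℝ)) =
        max (Real.log (coverNum (G (f*g)) δ)) (Real.log (coverNum (G f) δ)) := by
      rcases max_cases ((coverNum (G (f*g)) δ : ℝ)) ((coverNum (G f) δ : ℝ)) with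
        ⟨hEq, hge⟩ | ⟨hEq, hge⟩
      · rw [hEq, max_eq_left (Real.log_le_log (by linarith) hge)]
      · rw [hEq, max_eq_right (Real.log_le_log (by linarith) hge.le)]
    have hdivle : Real.log (coverNum (G g) δ) / -Real.log δ ≤
        Real.log K / -Real.log δ +
          max (Real.log (coverNum (G (f*g)) δ) / -Real.log δ)
            (Real.log (coverNum (G f) δ) / -Real.log δ) := by
      rw [max_div_div_right hLd.le, ← add_div]
      exact div_le_div_of_nonneg_right (hlmax ▸ hlg) hLd.le
    have hsmall : Real.log K / -Real.log δ ≤ ε/3 := by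
      have hlogδ : Real.log δ < Real.log δ₁ := Real.log_lt_log h0 hδd
      rw [hδ₁def, Real.log_exp] at hlogδ
      rw [div_le_iff₀ hLd]
      have h4 : Real.log δ * ε < -(3 * Real.log K) := (lt_div_iff₀ hε).1 hlogδ
      nlinarith [h4]
    have hmaxb : max (Real.log (coverNum (G (f*g)) δ) / -Real.log δ)
        (Real.log (coverNum (G f) δ) / -Real.log δ) ≤
        max (upperBoxDim (G (f*g))) (upperBoxDim (G f)) + ε/3 := by
      apply max_le
      · exact h_h.le.trans (add_le_add_left (le_max_left _ _) _)
      · exact h_f.le.trans (add_le_add_left (le_max_right _ _) _)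
    calc Real.log (coverNum (G g) δ) / -Real.log δ ≤ _ := hdivle
      _ ≤ ε/3 + (max (upperBoxDim (G (f*g))) (upperBoxDim (G f)) + ε/3) :=
          add_le_add hsmall hmaxb
      _ ≤ max (upperBoxDim (G (f*g))) (upperBoxDim (G f)) + ε := by linarith
  exact limsup_le_of_le hCob hev
end
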